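/- arXiv:1204.4577 — 2 statements merged into one kernel-verified Lean document; each statement's English description precedes it below -/
import Mathlib

section
/- Set k'_i := k_i(m+n) − i·mn for i = 0, 1, …, m+n−1. Then k'_i + k'_{m+n−1−i} = mn for all i, one has k'_0 = 0 ≤ k'_i ≤ k'_{m+n−1} = mn, and the set {k'_i : i = 0, 1, …, m+n−1} consists of m+n distinct elements and equals 𝔉(m,n). -/
lemma mono_enum_unique {N : ℕ} {f g : ℕ → ℕ}
    (hf : ∀ i j, i < j → j < N → f i < f j)
    (hg : ∀ i j, i < j → j < N → g i < g j)
    (hfg : ∀ i, i < N → ∃ j, j < N ∧ g j = f i)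
    (hgf : ∀ i, i < N → ∃ j, j < N ∧ f j = g i) :
    ∀ i, i < N → f i = g i := by
  intro i
  induction i using Nat.strong_induction_on with
  | _ i ih =>
    intro hi
    obtain ⟨j, hj, hji⟩ := hgf i hi
    obtain ⟨j', hj', hj'i⟩ := hfg i hi
    have h1 : f i ≤ f j := by
      by_contra h
      push_neg at h
      have hji2 : j < i := by
        by_contra hc
        push_neg at hc
        rcases eq_or_lt_of_le hc with rfl | hlt
        · omega
        · exact absurd (hf i j hlt hj) (by omega)
      have := ih j hji2 (by omega)
      have := hg j i hji2 hi
      omega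
    have h2 : g i ≤ g j' := by
      by_contra h
      push_neg at h
      have hji2 : j' < i := by
        by_contra hc
        push_neg at hc
        rcases eq_or_lt_of_le hc with rfl | hlt
        · omega
        · exact absurd (hg i j' hlt hj') (by omega)
      have := ih j' hji2 (by omega)
      have := hf j' i hji2 hi
      omega
    omega

lemma card_dvd_filter_range (d y : ℕ) :
    ((Finset.range (y + 1)).filter (d ∣ ·)).card = y / d + 1 := by
  have h : Finset.range (y + 1) = insert 0 (Finset.Ioc 0 y) := by
    ext x; simp [Finset.mem_Ioc] <;> omega
  rw [h, Finset.filter_insert, if_pos (dvd_zero d),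
    Finset.card_insert_of_notMem (by simp), Nat.Ioc_filter_dvd_card_eq_div]

/-- Let `k` be the increasing enumeration of `𝔉(m,n)`
and set `k' i = k i * (m+n) - i * m * n` (in `ℤ`).  Then
`k' i + k' (m+n-1-i) = mn`, `k' 0 = 0 ≤ k' i ≤ k' (m+n-1) = mn`, the
values `k' 0, …, k' (m+n-1)` are pairwise distinct, and the set of these
values equals `𝔉(m,n)`. -/
theorem kprime_properties (m n : ℕ) (hm : 2 ≤ m) (hmn : m < n)
    (hcop : Nat.Coprime m n) (k : ℕ → ℕ)
    (hmono : ∀ i j : ℕ, i < j → j < m + n → k i < k j)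
    (hmem : ∀ x : ℕ, ((m ∣ x ∨ n ∣ x) ∧ x ≤ m * n) ↔ ∃ i < m + n, k i = x)
    (k' : ℕ → ℤ)
    (hk' : ∀ i, k' i = (k i : ℤ) * ((m : ℤ) + n) - (i : ℤ) * ((m : ℤ) * n)) :
    (∀ i < m + n, k' i + k' (m + n - 1 - i) = (m : ℤ) * n) ∧
    k' 0 = 0 ∧
    (∀ i < m + n, 0 ≤ k' i ∧ k' i ≤ (m : ℤ) * n) ∧
    k' (m + n - 1) = (m : ℤ) * n ∧
    (∀ i j, i < m + n → j < m + n → k' i = k' j → i = j) ∧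
    (∀ x : ℤ, (∃ i < m + n, k' i = x) ↔
      (((m : ℤ) ∣ x ∨ (n : ℤ) ∣ x) ∧ 0 ≤ x ∧ x ≤ (m : ℤ) * n)) := by
  have hm0 : 0 < m := by omega
  have hn0 : 0 < n := by omega
  set N := m + n with hN
  -- basic facts about k
  have hkinj : ∀ i j, i < N → j < N → k i = k j → i = j := by
    intro i j hi hj hk
    by_contra h
    rcases Nat.lt_or_ge i j with h' | h'
    · exact absurd (hmono i j h' hj) (by omega)
    · exact absurd (hmono j i (by omega) hi) (by omega)
  have hkmem : ∀ i, i < N → (m ∣ k i ∨ n ∣ k i) ∧ k i ≤ m * n := by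
    intro i hi
    exact (hmem (k i)).mpr ⟨i, hi, rfl⟩
  have hk0 : k 0 = 0 := by
    obtain ⟨i, hi, hki⟩ := (hmem 0).mp ⟨Or.inl (dvd_zero m), Nat.zero_le _⟩
    rcases Nat.eq_zero_or_pos i with rfl | hpos
    · exact hki
    · have := hmono 0 i hpos hi; omega
  have hklast : k (N - 1) = m * n := by
    obtain ⟨i, hi, hki⟩ := (hmem (m * n)).mp ⟨Or.inl ⟨n, rfl⟩, le_refl _⟩
    rcases Nat.lt_or_ge i (N - 1) with h | h
    · have := hmono i (N - 1) h (by omega)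
      have := hkmem (N - 1) (by omega)
      omega
    · have : i = N - 1 := by omega
      rw [← this]; exact hki
  have hklt : ∀ i, i < N - 1 → k i < m * n := by
    intro i hi
    have := hmono i (N - 1) hi (by omega)
    omega
  have hkle : ∀ i j, i ≤ j → j < N → k i ≤ k j := by
    intro i j hij hj
    rcases eq_or_lt_of_le hij with rfl | h
    · exact le_refl _
    · exact le_of_lt (hmono i j h hj)
  -- symmetry: k (N-1-i) = m*n - k i
  have hsym : ∀ i, i < N → k (N - 1 - i) = m * n - k i := by
    have hS : ∀ x, (m ∣ x ∨ n ∣ x) ∧ x ≤ m * n →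
        (m ∣ m * n - x ∨ n ∣ m * n - x) ∧ m * n - x ≤ m * n := by
      rintro x ⟨hd, hle⟩
      refine ⟨?_, by omega⟩
      rcases hd with hd | hd
      · exact Or.inl (Nat.dvd_sub ⟨n, rfl⟩ hd)
      · exact Or.inr (Nat.dvd_sub ⟨m, mul_comm m n⟩ hd)
    have key : ∀ i, i < N → k i = m * n - k (N - 1 - i) := by
      apply mono_enum_unique hmono
      · intro i j hij hj
        have h1 : N - 1 - j < N - 1 - i := by omega
        have h2 := hmono (N - 1 - j) (N - 1 - i) h1 (by omega)
        have h3 := (hkmem (N - 1 - i) (by omega)).2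
        omega
      · intro i hi
        obtain ⟨l, hl, hkl⟩ := (hmem (m * n - k i)).mp (hS (k i) (hkmem i hi))
        refine ⟨N - 1 - l, by omega, ?_⟩
        have : N - 1 - (N - 1 - l) = l := by omega
        rw [this, hkl]
        have := (hkmem i hi).2
        omega
      · intro i hi
        obtain ⟨l, hl, hkl⟩ :=
          (hmem (m * n - k (N - 1 - i))).mp (hS _ (hkmem (N - 1 - i) (by omega)))
        exact ⟨l, hl, hkl⟩
    intro i hi
    have := key i hi
    have := (hkmem (N - 1 - i) (by omega)).2
    omega
  -- counting: i = k i / m + k i / n for i < N - 1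
  have hcount : ∀ i, i < N - 1 → i = k i / m + k i / n := by
    intro i hi
    have hy : k i < m * n := hklt i hi
    set y := k i with hy'
    have hA : ((Finset.range (y + 1)).filter (fun x => m ∣ x ∨ n ∣ x)) =
        (Finset.range (i + 1)).image k := by
      ext x
      simp only [Finset.mem_filter, Finset.mem_range, Finset.mem_image]
      constructor
      · rintro ⟨hx1, hx2⟩
        obtain ⟨j, hj, hkj⟩ := (hmem x).mp ⟨hx2, by omega⟩
        refine ⟨j, ?_, hkj⟩
        by_contra h
        have := hmono i j (by omega) hj
        omega
      · rintro ⟨j, hj, rfl⟩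
        have h1 := hkle j i (by omega) (by omega)
        have h2 := (hkmem j (by omega)).1
        exact ⟨by omega, h2⟩
    have hcard1 : ((Finset.range (y + 1)).filter (fun x => m ∣ x ∨ n ∣ x)).card = i + 1 := by
      rw [hA, Finset.card_image_of_injOn, Finset.card_range]
      intro a ha b hb hab
      simp only [Finset.mem_coe, Finset.mem_range] at ha hb
      exact hkinj a b (by omega) (by omega) hab
    have hsplit : ((Finset.range (y + 1)).filter (fun x => m ∣ x ∨ n ∣ x)) =
        ((Finset.range (y + 1)).filter (m ∣ ·)) ∪ ((Finset.range (y + 1)).filter (n ∣ ·)) := by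
      rw [← Finset.filter_or]
    have hinter : ((Finset.range (y + 1)).filter (m ∣ ·)) ∩ ((Finset.range (y + 1)).filter (n ∣ ·))
        = {0} := by
      ext x
      simp only [Finset.mem_inter, Finset.mem_filter, Finset.mem_range, Finset.mem_singleton]
      constructor
      · rintro ⟨⟨hx1, hx2⟩, ⟨-, hx3⟩⟩
        have hd : m * n ∣ x := hcop.mul_dvd_of_dvd_of_dvd hx2 hx3
        exact Nat.eq_zero_of_dvd_of_lt hd (by omega)
      · rintro rfl
        exact ⟨⟨by omega, dvd_zero m⟩, by omega, dvd_zero n⟩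
    have hu := Finset.card_union_add_card_inter
      ((Finset.range (y + 1)).filter (m ∣ ·)) ((Finset.range (y + 1)).filter (n ∣ ·))
    rw [hinter, Finset.card_singleton, card_dvd_filter_range, card_dvd_filter_range] at hu
    rw [hsplit] at hcard1
    omega
  -- the value formula
  have hval : ∀ i, i < N - 1 → k' i = ((k i % n) * m + (k i % m) * n : ℕ) := by
    intro i hi
    have hidx : (i : ℤ) = ((k i / m : ℕ) : ℤ) + ((k i / n : ℕ) : ℤ) := by
      exact_mod_cast congrArg (Nat.cast : ℕ → ℤ) (hcount i hi)
    have e1 : (k i : ℤ) = (m : ℤ) * ((k i / m : ℕ) : ℤ) + ((k i % m : ℕ) : ℤ) := by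
      exact_mod_cast (Nat.div_add_mod (k i) m).symm
    have e2 : (k i : ℤ) = (n : ℤ) * ((k i / n : ℕ) : ℤ) + ((k i % n : ℕ) : ℤ) := by
      exact_mod_cast (Nat.div_add_mod (k i) n).symm
    rw [hk', hidx, Nat.cast_add, Nat.cast_mul, Nat.cast_mul]
    linear_combination (m : ℤ) * e2 + (n : ℤ) * e1
  -- structural facts about the natural value
  have hvlt : ∀ i, i < N - 1 → (k i % n) * m + (k i % m) * n < m * n := by
    intro i hi
    have h1 : k i % m < m := Nat.mod_lt _ hm0
    have h2 : k i % n < n := Nat.mod_lt _ hn0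
    rcases (hkmem i (by omega)).1 with hd | hd
    · have h3 : k i % m = 0 := Nat.mod_eq_zero_of_dvd hd
      nlinarith
    · have h3 : k i % n = 0 := Nat.mod_eq_zero_of_dvd hd
      nlinarith
  have hvdvd : ∀ i, i < N - 1 →
      (m ∣ (k i % n) * m + (k i % m) * n ∨ n ∣ (k i % n) * m + (k i % m) * n) := by
    intro i hi
    rcases (hkmem i (by omega)).1 with hd | hd
    · have h3 : k i % m = 0 := Nat.mod_eq_zero_of_dvd hd
      exact Or.inl ⟨k i % n, by rw [h3]; ring⟩
    · have h3 : k i % n = 0 := Nat.mod_eq_zero_of_dvd hd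
      exact Or.inr ⟨k i % m, by rw [h3]; ring⟩
  -- distinctness for indices below N - 1
  have hmodinj : ∀ i j, i < N - 1 → j < N - 1 → k' i = k' j → i = j := by
    intro i j hi hj heq
    rw [hval i hi, hval j hj] at heq
    have heqn : (k i % n) * m + (k i % m) * n = (k j % n) * m + (k j % m) * n := by
      exact_mod_cast heq
    have h1 : k i % m < m := Nat.mod_lt _ hm0
    have h2 : k i % n < n := Nat.mod_lt _ hn0
    have h3 : k j % m < m := Nat.mod_lt _ hm0
    have h4 : k j % n < n := Nat.mod_lt _ hn0
    have hmm : k i % m = k j % m ∧ k i % n = k j % n := by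
      have zero_case : ∀ a b : ℕ, a * m = b * n → a < n → b < m → a = 0 ∧ b = 0 := by
        intro a b hab ha hb
        have hmd : m ∣ b * n := ⟨a, by rw [← hab]; ring⟩
        have hb0 : b = 0 := Nat.eq_zero_of_dvd_of_lt (hcop.dvd_of_dvd_mul_right hmd) hb
        subst hb0
        simp only [Nat.zero_mul] at hab
        have := Nat.mul_eq_zero.mp hab
        omega
      rcases (hkmem i (by omega)).1 with hd | hd <;>
        rcases (hkmem j (by omega)).1 with hd' | hd'
      · have e1 : k i % m = 0 := Nat.mod_eq_zero_of_dvd hd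
        have e2 : k j % m = 0 := Nat.mod_eq_zero_of_dvd hd'
        rw [e1, e2] at heqn
        simp only [Nat.zero_mul, Nat.add_zero] at heqn
        have := Nat.eq_of_mul_eq_mul_right hm0 heqn
        omega
      · have e1 : k i % m = 0 := Nat.mod_eq_zero_of_dvd hd
        have e2 : k j % n = 0 := Nat.mod_eq_zero_of_dvd hd'
        rw [e1, e2] at heqn
        simp only [Nat.zero_mul, Nat.add_zero, Nat.zero_add] at heqn
        have := zero_case _ _ heqn h2 h3
        omega
      · have e1 : k i % n = 0 := Nat.mod_eq_zero_of_dvd hd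
        have e2 : k j % m = 0 := Nat.mod_eq_zero_of_dvd hd'
        rw [e1, e2] at heqn
        simp only [Nat.zero_mul, Nat.add_zero, Nat.zero_add] at heqn
        have := zero_case _ _ heqn.symm h4 h1
        omega
      · have e1 : k i % n = 0 := Nat.mod_eq_zero_of_dvd hd
        have e2 : k j % n = 0 := Nat.mod_eq_zero_of_dvd hd'
        rw [e1, e2] at heqn
        simp only [Nat.zero_mul, Nat.zero_add] at heqn
        have := Nat.eq_of_mul_eq_mul_right hn0 heqn
        omega
    have hmod : k i ≡ k j [MOD m * n] :=
      (Nat.modEq_and_modEq_iff_modEq_mul hcop).mp ⟨hmm.1, hmm.2⟩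
    have : k i % (m * n) = k j % (m * n) := hmod
    rw [Nat.mod_eq_of_lt (hklt i hi), Nat.mod_eq_of_lt (hklt j hj)] at this
    exact hkinj i j (by omega) (by omega) this
  have hlastval : k' (N - 1) = (m : ℤ) * n := by
    rw [hk', hklast]
    have h1 : ((N - 1 : ℕ) : ℤ) = (m : ℤ) + n - 1 := by omega
    rw [h1]
    push_cast
    ring
  have hinj : ∀ i j, i < N → j < N → k' i = k' j → i = j := by
    intro i j hi hj heq
    by_cases hi' : i < N - 1 <;> by_cases hj' : j < N - 1
    · exact hmodinj i j hi' hj' heq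
    · exfalso
      have hj2 : j = N - 1 := by omega
      rw [hval i hi', hj2, hlastval] at heq
      have := hvlt i hi'
      have : ((k i % n) * m + (k i % m) * n : ℕ) < ((m * n : ℕ) : ℤ) := by exact_mod_cast this
      rw [heq] at this
      push_cast at this
      omega
    · exfalso
      have hi2 : i = N - 1 := by omega
      rw [hval j hj', hi2, hlastval] at heq
      have := hvlt j hj'
      have : ((k j % n) * m + (k j % m) * n : ℕ) < ((m * n : ℕ) : ℤ) := by exact_mod_cast this
      rw [← heq] at this
      push_cast at this
      omega
    · omega
  have hconj1 : ∀ i, i < N → k' i + k' (N - 1 - i) = (m : ℤ) * n := by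
    intro i hi
    rw [hk', hk', hsym i hi]
    have hc1 : ((N - 1 - i : ℕ) : ℤ) = (m : ℤ) + n - 1 - i := by omega
    have hc2 : ((m * n - k i : ℕ) : ℤ) = (m : ℤ) * n - k i := by
      rw [Nat.cast_sub (hkmem i hi).2]
      push_cast
      ring
    rw [hc1, hc2]
    ring
  have hbnd : ∀ i, i < N → 0 ≤ k' i ∧ k' i ≤ (m : ℤ) * n := by
    intro i hi
    by_cases hi' : i < N - 1
    · rw [hval i hi']
      refine ⟨by positivity, ?_⟩
      have := le_of_lt (hvlt i hi')
      calc (((k i % n) * m + (k i % m) * n : ℕ) : ℤ) ≤ ((m * n : ℕ) : ℤ) := by exact_mod_cast this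
        _ = (m : ℤ) * n := by push_cast; ring
    · have h2 : i = N - 1 := by omega
      rw [h2, hlastval]
      constructor
      · positivity
      · exact le_refl _
  have hfwd : ∀ i, i < N → ∃ v : ℕ, k' i = (v : ℤ) ∧ (m ∣ v ∨ n ∣ v) ∧ v ≤ m * n := by
    intro i hi
    by_cases hi' : i < N - 1
    · exact ⟨_, hval i hi', hvdvd i hi', le_of_lt (hvlt i hi')⟩
    · have h2 : i = N - 1 := by omega
      exact ⟨m * n, by rw [h2, hlastval]; push_cast; ring, Or.inl ⟨n, rfl⟩, le_refl _⟩
  -- cardinality argument for surjectivity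
  have hScard : ((Finset.range (m * n + 1)).filter (fun x => m ∣ x ∨ n ∣ x)).card = N := by
    have hSeq : (Finset.range (m * n + 1)).filter (fun x => m ∣ x ∨ n ∣ x) =
        (Finset.range N).image k := by
      ext x
      simp only [Finset.mem_filter, Finset.mem_range, Finset.mem_image]
      constructor
      · rintro ⟨h1, h2⟩
        obtain ⟨i, hi, hki⟩ := (hmem x).mp ⟨h2, by omega⟩
        exact ⟨i, hi, hki⟩
      · rintro ⟨i, hi, rfl⟩
        exact ⟨by have := (hkmem i hi).2; omega, (hkmem i hi).1⟩
    rw [hSeq, Finset.card_image_of_injOn, Finset.card_range]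
    intro a ha b hb hab
    simp only [Finset.mem_coe, Finset.mem_range] at ha hb
    exact hkinj a b ha hb hab
  have hTF : (Finset.range N).image k' =
      ((Finset.range (m * n + 1)).filter (fun x => m ∣ x ∨ n ∣ x)).image
        (Nat.cast : ℕ → ℤ) := by
    apply Finset.eq_of_subset_of_card_le
    · intro x hx
      simp only [Finset.mem_image, Finset.mem_range] at hx
      obtain ⟨i, hi, rfl⟩ := hx
      obtain ⟨v, hv, hvd, hvle⟩ := hfwd i hi
      refine Finset.mem_image.mpr ⟨v, ?_, hv.symm⟩
      simp only [Finset.mem_filter, Finset.mem_range]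
      exact ⟨by omega, hvd⟩
    · rw [Finset.card_image_of_injective _ Nat.cast_injective, hScard]
      rw [Finset.card_image_of_injOn, Finset.card_range]
      intro a ha b hb hab
      simp only [Finset.mem_coe, Finset.mem_range] at ha hb
      exact hinj a b ha hb hab
  refine ⟨hconj1, ?_, hbnd, hlastval, hinj, ?_⟩
  · rw [hk' 0, hk0]
    simp
  · intro x
    constructor
    · rintro ⟨i, hi, rfl⟩
      obtain ⟨v, hv, hvd, hvle⟩ := hfwd i hi
      rw [hv]
      refine ⟨?_, by positivity, ?_⟩
      · rcases hvd with h | h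
        · exact Or.inl (Int.natCast_dvd_natCast.mpr h)
        · exact Or.inr (Int.natCast_dvd_natCast.mpr h)
      · calc ((v : ℕ) : ℤ) ≤ ((m * n : ℕ) : ℤ) := by exact_mod_cast hvle
          _ = (m : ℤ) * n := by push_cast; ring
    · rintro ⟨hd, h0, hle⟩
      have hcast : ((m * n : ℕ) : ℤ) = (m : ℤ) * n := by push_cast; ring
      have hx : x ∈ ((Finset.range (m * n + 1)).filter (fun x => m ∣ x ∨ n ∣ x)).image
          (Nat.cast : ℕ → ℤ) := by
        refine Finset.mem_image.mpr ⟨x.toNat, ?_, Int.toNat_of_nonneg h0⟩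
        simp only [Finset.mem_filter, Finset.mem_range]
        constructor
        · have : (x.toNat : ℤ) ≤ ((m * n : ℕ) : ℤ) := by
            rw [Int.toNat_of_nonneg h0, hcast]; exact hle
          have := Int.ofNat_le.mp this
          omega
        · rcases hd with h | h
          · exact Or.inl (Int.natCast_dvd_natCast.mp (by rwa [Int.toNat_of_nonneg h0]))
          · exact Or.inr (Int.natCast_dvd_natCast.mp (by rwa [Int.toNat_of_nonneg h0]))
      rw [← hTF] at hx
      obtain ⟨i, hi, hki⟩ := Finset.mem_image.mp hx
      exact ⟨i, by simpa using hi, hki⟩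
end

section
/- In the polynomial ring ℤ[T], (Σ_{i=0}^{m+n−1} T^{k_i})·(T^m − 1)·(T^n − 1) = (T^{mn} − 1)·(T^{m+n} − 1); consequently Σ_{i=0}^{m+n−1} T^{k_i(m+n) − i·mn} = Σ_{i=0}^{m+n−1} T^{k_i}. -/
open Finset Polynomial

private def Fs (m n : ℕ) : Finset ℕ :=
  (Finset.range (m*n+1)).filter (fun y => m ∣ y ∨ n ∣ y)

private def Am (m n : ℕ) : Finset ℕ := (Finset.range (n+1)).image (· * m)

private def cnt (m n x : ℕ) : ℕ := ((Fs m n).filter (· < x)).card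

private lemma mem_Fs (m n x : ℕ) : x ∈ Fs m n ↔ (m ∣ x ∨ n ∣ x) ∧ x ≤ m * n := by
  simp only [Fs, Finset.mem_filter, Finset.mem_range, Nat.lt_succ_iff]
  tauto

private lemma Fs_comm (m n : ℕ) : Fs n m = Fs m n := by
  ext y
  simp only [Fs, Finset.mem_filter, Finset.mem_range, Nat.mul_comm n m]
  tauto

private lemma cnt_comm (m n x : ℕ) : cnt n m x = cnt m n x := by
  unfold cnt; rw [Fs_comm]

private lemma cnt_zero (m n : ℕ) : cnt m n 0 = 0 := by
  unfold cnt
  rw [Finset.filter_false_of_mem (fun x _ => Nat.not_lt_zero x), Finset.card_empty]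

private lemma Fs_eq_union (m n : ℕ) (hm : 0 < m) (hn : 0 < n) :
    Fs m n = Am m n ∪ Am n m := by
  ext x
  simp only [Fs, Am, Finset.mem_filter, Finset.mem_range, Finset.mem_union,
    Finset.mem_image, Nat.lt_succ_iff]
  constructor
  · rintro ⟨hle, (⟨j, rfl⟩ | ⟨j, rfl⟩)⟩
    · exact Or.inl ⟨j, Nat.le_of_mul_le_mul_left hle hm, Nat.mul_comm j m⟩
    · rw [Nat.mul_comm m n] at hle
      exact Or.inr ⟨j, Nat.le_of_mul_le_mul_left hle hn, Nat.mul_comm j n⟩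
  · rintro (⟨j, hj, rfl⟩ | ⟨j, hj, rfl⟩)
    · exact ⟨(Nat.mul_le_mul_right m hj).trans (le_of_eq (Nat.mul_comm n m)),
        Or.inl (dvd_mul_left m j)⟩
    · exact ⟨Nat.mul_le_mul_right n hj, Or.inr (dvd_mul_left n j)⟩

private lemma Am_inter (m n : ℕ) (hcop : Nat.Coprime m n) :
    Am m n ∩ Am n m = ({0, m * n} : Finset ℕ) := by
  ext x
  simp only [Am, Finset.mem_inter, Finset.mem_image, Finset.mem_range,
    Finset.mem_insert, Finset.mem_singleton, Nat.lt_succ_iff]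
  constructor
  · rintro ⟨⟨a, ha, rfl⟩, ⟨b, hb, hba⟩⟩
    have hdvd : m * n ∣ a * m :=
      Nat.Coprime.mul_dvd_of_dvd_of_dvd hcop (dvd_mul_left m a)
        (hba ▸ dvd_mul_left n b)
    rcases Nat.eq_zero_or_pos (a * m) with h0 | hpos
    · exact Or.inl h0
    · refine Or.inr ?_
      have h1 : m * n ≤ a * m := Nat.le_of_dvd hpos hdvd
      have h2 : a * m ≤ n * m := Nat.mul_le_mul_right m ha
      exact le_antisymm (h2.trans (le_of_eq (Nat.mul_comm n m))) h1
  · rintro (rfl | rfl)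
    · exact ⟨⟨0, Nat.zero_le n, by simp⟩, ⟨0, Nat.zero_le m, by simp⟩⟩
    · exact ⟨⟨n, le_rfl, Nat.mul_comm n m⟩, ⟨m, le_rfl, rfl⟩⟩

private lemma card_Am_filter (m n x c : ℕ) (hm : 0 < m) (hcn : c ≤ n + 1)
    (hiff : ∀ i, i * m < x ↔ i < c) :
    ((Am m n).filter (· < x)).card = c := by
  unfold Am
  rw [Finset.filter_image,
    Finset.card_image_of_injective _ (fun a b h => Nat.eq_of_mul_eq_mul_right hm h)]
  have : (Finset.range (n+1)).filter (fun j => j * m < x) = Finset.range c := by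
    ext i
    simp only [Finset.mem_filter, Finset.mem_range, hiff]
    omega
  rw [this, Finset.card_range]

private lemma cnt_eq (m n x cA cB : ℕ) (hm : 0 < m) (hn : 0 < n)
    (hcop : Nat.Coprime m n) (hx1 : 1 ≤ x) (hxN : x ≤ m * n)
    (hcA : ((Am m n).filter (· < x)).card = cA)
    (hcB : ((Am n m).filter (· < x)).card = cB) :
    cnt m n x = cA + cB - 1 := by
  unfold cnt
  rw [Fs_eq_union m n hm hn, Finset.filter_union]
  have hcard := Finset.card_union_add_card_inter
    ((Am m n).filter (· < x)) ((Am n m).filter (· < x))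
  rw [← Finset.filter_inter_distrib, Am_inter m n hcop, hcA, hcB] at hcard
  have hI : ({0, m*n} : Finset ℕ).filter (· < x) = ({0} : Finset ℕ) := by
    ext y
    simp only [Finset.mem_filter, Finset.mem_insert, Finset.mem_singleton]
    constructor
    · rintro ⟨rfl | rfl, hy⟩
      · rfl
      · exact absurd (lt_of_lt_of_le hy hxN) (lt_irrefl _)
    · rintro rfl
      exact ⟨Or.inl rfl, hx1⟩
  rw [hI, Finset.card_singleton] at hcard
  omega

private lemma cnt_top (m n : ℕ) (hm : 0 < m) (hn : 0 < n) (hcop : Nat.Coprime m n) :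
    cnt m n (m * n) = m + n - 1 := by
  have h1 : cnt m n (m*n) = n + m - 1 := by
    refine cnt_eq m n (m*n) n m hm hn hcop (Nat.mul_pos hm hn) le_rfl ?_ ?_
    · refine card_Am_filter m n (m*n) n hm (by omega) (fun i => ?_)
      rw [Nat.mul_comm m n]
      exact Nat.mul_lt_mul_right hm
    · refine card_Am_filter n m (m*n) m hn (by omega) (fun i => ?_)
      exact Nat.mul_lt_mul_right hn
  omega

private lemma phi_top (m n : ℕ) : (m*n) * (m+n) - (m+n-1) * (m*n) = m*n := by
  obtain ⟨s, hs⟩ : ∃ s, m + n = s + 1 ∨ (m = 0 ∧ n = 0) := by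
    rcases Nat.eq_zero_or_pos (m+n) with h | h
    · exact ⟨0, Or.inr (by omega)⟩
    · exact ⟨m+n-1, Or.inl (by omega)⟩
  rcases hs with hs | ⟨rfl, rfl⟩
  · rw [hs]
    have h1 : (m*n) * (s+1) = m*n + s * (m*n) := by ring
    rw [h1, Nat.succ_sub_one, Nat.add_sub_cancel]
  · simp

private lemma phi_strict (m n j : ℕ) (hm : 0 < m) (hn : 0 < n)
    (hcop : Nat.Coprime m n) (hj1 : 1 ≤ j) (hjn : j < n) :
    (j*m) * (m+n) - cnt m n (j*m) * (m*n) = m * ((j*m) % n) := by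
  have hnd : ¬ n ∣ j * m := by
    intro hdvd
    have : n ∣ j := (Nat.Coprime.dvd_of_dvd_mul_right (Nat.Coprime.symm hcop)) hdvd
    have := Nat.le_of_dvd (by omega) this
    omega
  set q := j * m / n with hq
  set r := j * m % n with hr
  have hjm : j * m = n * q + r := (Nat.div_add_mod (j*m) n).symm
  have hr1 : 1 ≤ r := by
    rcases Nat.eq_zero_or_pos r with h0 | h
    · exact absurd (Nat.dvd_of_mod_eq_zero h0) hnd
    · exact h
  have hxN : j * m ≤ m * n := by
    calc j * m ≤ n * m := Nat.mul_le_mul_right m (le_of_lt hjn)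
    _ = m * n := Nat.mul_comm n m
  have hqm : q ≤ m := by
    have h1 : j * m ≤ n * m := Nat.mul_le_mul_right m (le_of_lt hjn)
    have h2 : q ≤ n * m / n := Nat.div_le_div_right (hxN.trans (le_of_eq (Nat.mul_comm m n)))
    rwa [Nat.mul_div_cancel_left m hn] at h2
  have hcnt : cnt m n (j*m) = j + q := by
    have hA' : ((Am m n).filter (· < j*m)).card = j :=
      card_Am_filter m n (j*m) j hm (by omega) (fun i => Nat.mul_lt_mul_right hm)
    have hB' : ((Am n m).filter (· < j*m)).card = q + 1 := by
      refine card_Am_filter n m (j*m) (q+1) hn (by omega) (fun i => ?_)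
      constructor
      · intro hlt
        have : i ≤ q := (Nat.le_div_iff_mul_le hn).mpr (le_of_lt hlt)
        omega
      · intro hlt
        have h1 : i * n ≤ j * m := (Nat.le_div_iff_mul_le hn).mp (by omega)
        rcases Nat.lt_or_ge (i*n) (j*m) with h2 | h2
        · exact h2
        · have : i * n = j * m := le_antisymm h1 h2
          exact absurd (this ▸ dvd_mul_left n i) hnd
    have h := cnt_eq m n (j*m) j (q+1) hm hn hcop (Nat.mul_pos hj1 hm) hxN hA' hB'
    rw [h]; omega
  rw [hcnt]
  refine Nat.sub_eq_of_eq_add ?_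
  have e1 : (j*m) * m = (n*q+r) * m := by rw [← hjm]
  calc (j*m) * (m+n) = (j*m)*m + (j*m)*n := by ring
    _ = (n*q+r)*m + (j*m)*n := by rw [e1]
    _ = m * r + (j+q) * (m*n) := by ring

private lemma phi_strictB (m n j : ℕ) (hm : 0 < m) (hn : 0 < n)
    (hcop : Nat.Coprime m n) (hj1 : 1 ≤ j) (hjm : j < m) :
    (j*n) * (m+n) - cnt m n (j*n) * (m*n) = n * ((j*n) % m) := by
  have h := phi_strict n m j hn hm (Nat.Coprime.symm hcop) hj1 hjm
  rwa [cnt_comm, Nat.add_comm n m, Nat.mul_comm n m] at h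

private lemma sum_Ico_mod_bij (m n : ℕ) (hn : 1 < n) (hcop : Nat.Coprime m n)
    (f : ℕ → Polynomial ℤ) :
    ∑ j ∈ Finset.Ico 1 n, f (j * m % n) = ∑ j ∈ Finset.Ico 1 n, f j := by
  obtain ⟨m', -, hm'⟩ := Nat.exists_mul_mod_eq_one_of_coprime hcop hn
  have hn0 : 0 < n := by omega
  have key : ∀ b c, (∀ a, a < n → (a * b % n) * c % n = a) →
      ∀ a ∈ Finset.Ico 1 n, a * b % n ∈ Finset.Ico 1 n := by
    intro b c hb a ha
    rw [Finset.mem_Ico] at ha ⊢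
    refine ⟨?_, Nat.mod_lt _ hn0⟩
    rcases Nat.eq_zero_or_pos (a * b % n) with h0 | h
    · have := hb a ha.2
      rw [h0] at this
      simp at this
      omega
    · exact h
  have inv1 : ∀ a, a < n → (a * m % n) * m' % n = a := by
    intro a ha
    rw [Nat.mod_mul_mod, mul_assoc, Nat.mul_mod a (m*m') n, hm', mul_one,
      Nat.mod_mod_of_dvd _ dvd_rfl, Nat.mod_eq_of_lt ha]
  have hm'm : m' * m % n = 1 := by rwa [Nat.mul_comm m' m]
  have inv2 : ∀ a, a < n → (a * m' % n) * m % n = a := by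
    intro a ha
    rw [Nat.mod_mul_mod, mul_assoc, Nat.mul_mod a (m'*m) n, hm'm, mul_one,
      Nat.mod_mod_of_dvd _ dvd_rfl, Nat.mod_eq_of_lt ha]
  refine Finset.sum_nbij' (fun a => a * m % n) (fun a => a * m' % n)
    (key m m' inv1) (key m' m inv2) ?_ ?_ ?_
  · intro a ha
    rw [Finset.mem_Ico] at ha
    exact inv1 a ha.2
  · intro a ha
    rw [Finset.mem_Ico] at ha
    exact inv2 a ha.2
  · intro a _; rfl

private lemma geom_aux (m n : ℕ) :
    (∑ j ∈ Finset.range (n+1), (Polynomial.X : Polynomial ℤ)^(j*m)) *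
      (Polynomial.X^m - 1)
      = Polynomial.X^(m*n) * Polynomial.X^m - 1 := by
  have h := geom_sum_mul ((Polynomial.X : Polynomial ℤ)^m) (n+1)
  rw [← pow_mul, Nat.mul_succ, pow_add] at h
  rw [← h]
  refine congrArg (· * _) (Finset.sum_congr rfl fun j _ => ?_)
  rw [← pow_mul, Nat.mul_comm]

private lemma sum_split (n : ℕ) (hn : 0 < n) (h : ℕ → Polynomial ℤ) :
    ∑ j ∈ Finset.range (n+1), h j = h 0 + (∑ j ∈ Finset.Ico 1 n, h j) + h n := by
  rw [Finset.sum_range_succ, Finset.range_eq_Ico, Finset.sum_eq_sum_Ico_succ_bot hn]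

private lemma sum_Am (m n : ℕ) (hm : 0 < m) (f : ℕ → Polynomial ℤ) :
    ∑ x ∈ Am m n, f x = ∑ j ∈ Finset.range (n+1), f (j * m) := by
  unfold Am
  rw [Finset.sum_image]
  intro a _ b _ h
  exact Nat.eq_of_mul_eq_mul_right hm h

/-- Let `k` be the increasing enumeration of `𝔉(m,n)`.
In `ℤ[T]` one has
`(Σ_{i<m+n} T^(k i)) * (T^m - 1) * (T^n - 1) = (T^(mn) - 1) * (T^(m+n) - 1)`,
and consequently `Σ_{i<m+n} T^(k i * (m+n) - i*m*n) = Σ_{i<m+n} T^(k i)`. -/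
theorem sum_Tk_identity (m n : ℕ) (hm : 2 ≤ m) (hmn : m < n)
    (hcop : Nat.Coprime m n) (k : ℕ → ℕ)
    (hmono : ∀ i j : ℕ, i < j → j < m + n → k i < k j)
    (hmem : ∀ x : ℕ, ((m ∣ x ∨ n ∣ x) ∧ x ≤ m * n) ↔ ∃ i < m + n, k i = x) :
    (∑ i ∈ Finset.range (m + n), (Polynomial.X : Polynomial ℤ) ^ (k i)) *
        (Polynomial.X ^ m - 1) * (Polynomial.X ^ n - 1) =
      (Polynomial.X ^ (m * n) - 1) * (Polynomial.X ^ (m + n) - 1) ∧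
    ∑ i ∈ Finset.range (m + n),
        (Polynomial.X : Polynomial ℤ) ^ (k i * (m + n) - i * (m * n)) =
      ∑ i ∈ Finset.range (m + n), (Polynomial.X : Polynomial ℤ) ^ (k i) := by
  have hm0 : 0 < m := by omega
  have hn0 : 0 < n := by omega
  have hn1 : 1 < n := by omega
  have hm1 : 1 < m := by omega
  have hkF : ∀ i, i < m + n → k i ∈ Fs m n := fun i hi =>
    (mem_Fs m n (k i)).mpr ((hmem (k i)).mpr ⟨i, hi, rfl⟩)
  have hsum_k : ∀ f : ℕ → Polynomial ℤ,
      ∑ i ∈ Finset.range (m+n), f (k i) = ∑ x ∈ Fs m n, f x := by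
    intro f
    refine Finset.sum_bij (fun i _ => k i)
      (fun a ha => hkF a (Finset.mem_range.mp ha)) ?_ ?_ (fun a _ => rfl)
    · intro a ha b hb hab
      rcases lt_trichotomy a b with h | h | h
      · exact absurd hab (Nat.ne_of_lt (hmono a b h (Finset.mem_range.mp hb)))
      · exact h
      · exact absurd hab.symm (Nat.ne_of_lt (hmono b a h (Finset.mem_range.mp ha)))
    · intro x hx
      obtain ⟨i, hi, rfl⟩ := (hmem x).mp ((mem_Fs m n x).mp hx)
      exact ⟨i, Finset.mem_range.mpr hi, rfl⟩
  have hne0N : (0:ℕ) ≠ m * n := by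
    have := Nat.mul_pos hm0 hn0; omega
  have hunion : ∀ f : ℕ → Polynomial ℤ,
      ∑ x ∈ Fs m n, f x
        = (∑ x ∈ Am m n, f x) + (∑ x ∈ Am n m, f x) - (f 0 + f (m*n)) := by
    intro f
    have h := Finset.sum_union_inter (s₁ := Am m n) (s₂ := Am n m) (f := f)
    rw [Am_inter m n hcop, Finset.sum_pair hne0N] at h
    rw [Fs_eq_union m n hm0 hn0]
    exact eq_sub_of_add_eq h
  constructor
  · rw [hsum_k (fun x => (Polynomial.X : Polynomial ℤ)^x),
      hunion (fun x => (Polynomial.X : Polynomial ℤ)^x),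
      sum_Am m n hm0 (fun x => (Polynomial.X : Polynomial ℤ)^x),
      sum_Am n m hn0 (fun x => (Polynomial.X : Polynomial ℤ)^x)]
    have hSA := geom_aux m n
    have hSB := geom_aux n m
    rw [Nat.mul_comm n m] at hSB
    rw [pow_zero, pow_add]
    linear_combination (Polynomial.X^n - 1) * hSA + (Polynomial.X^m - 1) * hSB
  · have hidx : ∀ i, i < m + n → cnt m n (k i) = i := by
      intro i hi
      have himg : (Fs m n).filter (· < k i) = (Finset.range i).image k := by
        ext y
        simp only [Finset.mem_filter, Finset.mem_image, Finset.mem_range]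
        constructor
        · rintro ⟨hyF, hyi⟩
          obtain ⟨j, hj, rfl⟩ := (hmem y).mp ((mem_Fs m n y).mp hyF)
          refine ⟨j, ?_, rfl⟩
          rcases Nat.lt_or_ge j i with h | h
          · exact h
          · exfalso
            rcases Nat.eq_or_lt_of_le h with h' | h'
            · subst h'
              exact lt_irrefl _ hyi
            · exact Nat.lt_asymm hyi (hmono i j h' hj)
        · rintro ⟨j, hj, rfl⟩
          exact ⟨hkF j (by omega), hmono j i hj hi⟩
      unfold cnt
      rw [himg, Finset.card_image_of_injOn, Finset.card_range]
      intro a ha b hb hab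
      simp only [Finset.coe_range, Set.mem_Iio] at ha hb
      rcases lt_trichotomy a b with h | h | h
      · exact absurd hab (Nat.ne_of_lt (hmono a b h (by omega)))
      · exact h
      · exact absurd hab.symm (Nat.ne_of_lt (hmono b a h (by omega)))
    have hstep : ∑ i ∈ Finset.range (m+n),
        (Polynomial.X : Polynomial ℤ) ^ (k i * (m+n) - i * (m*n))
        = ∑ i ∈ Finset.range (m+n),
          (Polynomial.X : Polynomial ℤ) ^ (k i * (m+n) - cnt m n (k i) * (m*n)) := by
      refine Finset.sum_congr rfl fun i hi => ?_
      rw [hidx i (Finset.mem_range.mp hi)]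
    have hg0 : (0:ℕ) * (m+n) - cnt m n 0 * (m*n) = 0 := by
      rw [cnt_zero]; simp
    have hgN : (m*n) * (m+n) - cnt m n (m*n) * (m*n) = m*n := by
      rw [cnt_top m n hm0 hn0 hcop]; exact phi_top m n
    have hA2 : ∑ j ∈ Finset.range (n+1),
        (Polynomial.X : Polynomial ℤ) ^ ((j*m) * (m+n) - cnt m n (j*m) * (m*n))
        = ∑ j ∈ Finset.range (n+1), (Polynomial.X : Polynomial ℤ) ^ (j*m) := by
      have h0 : (0*m) * (m+n) - cnt m n (0*m) * (m*n) = 0*m := by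
        rw [Nat.zero_mul, cnt_zero]; simp
      have htop : (n*m) * (m+n) - cnt m n (n*m) * (m*n) = n*m := by
        rw [Nat.mul_comm n m, hgN]
      have hmid : ∑ j ∈ Finset.Ico 1 n,
          (Polynomial.X:Polynomial ℤ) ^ ((j*m)*(m+n) - cnt m n (j*m)*(m*n))
          = ∑ j ∈ Finset.Ico 1 n, (Polynomial.X:Polynomial ℤ) ^ (j * m) := by
        calc ∑ j ∈ Finset.Ico 1 n,
            (Polynomial.X:Polynomial ℤ) ^ ((j*m)*(m+n) - cnt m n (j*m)*(m*n))
            = ∑ j ∈ Finset.Ico 1 n, (Polynomial.X:Polynomial ℤ) ^ (m * (j*m % n)) := by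
              refine Finset.sum_congr rfl fun j hj => ?_
              rw [Finset.mem_Ico] at hj
              rw [phi_strict m n j hm0 hn0 hcop hj.1 hj.2]
          _ = ∑ j ∈ Finset.Ico 1 n, (Polynomial.X:Polynomial ℤ) ^ (m * j) :=
              sum_Ico_mod_bij m n hn1 hcop
                (fun r => (Polynomial.X:Polynomial ℤ) ^ (m * r))
          _ = ∑ j ∈ Finset.Ico 1 n, (Polynomial.X:Polynomial ℤ) ^ (j * m) := by
              refine Finset.sum_congr rfl fun j _ => ?_
              rw [Nat.mul_comm]
      rw [sum_split n hn0
          (fun j => (Polynomial.X : Polynomial ℤ) ^ ((j*m) * (m+n) - cnt m n (j*m) * (m*n))),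
        sum_split n hn0 (fun j => (Polynomial.X : Polynomial ℤ) ^ (j*m)),
        h0, htop, hmid]
    have hB2 : ∑ j ∈ Finset.range (m+1),
        (Polynomial.X : Polynomial ℤ) ^ ((j*n) * (m+n) - cnt m n (j*n) * (m*n))
        = ∑ j ∈ Finset.range (m+1), (Polynomial.X : Polynomial ℤ) ^ (j*n) := by
      have h0 : (0*n) * (m+n) - cnt m n (0*n) * (m*n) = 0*n := by
        rw [Nat.zero_mul, cnt_zero]; simp
      have htop : (m*n) * (m+n) - cnt m n (m*n) * (m*n) = m*n := hgN
      have hmid : ∑ j ∈ Finset.Ico 1 m,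
          (Polynomial.X:Polynomial ℤ) ^ ((j*n)*(m+n) - cnt m n (j*n)*(m*n))
          = ∑ j ∈ Finset.Ico 1 m, (Polynomial.X:Polynomial ℤ) ^ (j * n) := by
        calc ∑ j ∈ Finset.Ico 1 m,
            (Polynomial.X:Polynomial ℤ) ^ ((j*n)*(m+n) - cnt m n (j*n)*(m*n))
            = ∑ j ∈ Finset.Ico 1 m, (Polynomial.X:Polynomial ℤ) ^ (n * (j*n % m)) := by
              refine Finset.sum_congr rfl fun j hj => ?_
              rw [Finset.mem_Ico] at hj
              rw [phi_strictB m n j hm0 hn0 hcop hj.1 hj.2]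
          _ = ∑ j ∈ Finset.Ico 1 m, (Polynomial.X:Polynomial ℤ) ^ (n * j) :=
              sum_Ico_mod_bij n m hm1 (Nat.Coprime.symm hcop)
                (fun r => (Polynomial.X:Polynomial ℤ) ^ (n * r))
          _ = ∑ j ∈ Finset.Ico 1 m, (Polynomial.X:Polynomial ℤ) ^ (j * n) := by
              refine Finset.sum_congr rfl fun j _ => ?_
              rw [Nat.mul_comm]
      rw [sum_split m hm0
          (fun j => (Polynomial.X : Polynomial ℤ) ^ ((j*n) * (m+n) - cnt m n (j*n) * (m*n))),
        sum_split m hm0 (fun j => (Polynomial.X : Polynomial ℤ) ^ (j*n)),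
        h0, htop, hmid]
    rw [hstep,
      hsum_k (fun x => (Polynomial.X : Polynomial ℤ) ^ (x * (m+n) - cnt m n x * (m*n))),
      hsum_k (fun x => (Polynomial.X : Polynomial ℤ) ^ x),
      hunion (fun x => (Polynomial.X : Polynomial ℤ) ^ (x * (m+n) - cnt m n x * (m*n))),
      hunion (fun x => (Polynomial.X : Polynomial ℤ) ^ x),
      sum_Am m n hm0 (fun x => (Polynomial.X : Polynomial ℤ) ^ (x * (m+n) - cnt m n x * (m*n))),
      sum_Am n m hn0 (fun x => (Polynomial.X : Polynomial ℤ) ^ (x * (m+n) - cnt m n x * (m*n))),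
      sum_Am m n hm0 (fun x => (Polynomial.X : Polynomial ℤ) ^ x),
      sum_Am n m hn0 (fun x => (Polynomial.X : Polynomial ℤ) ^ x),
      hA2, hB2, hg0, hgN]
end
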